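/- Let n be a nonzero integer and let a, b be formal power series over ℂ in the variable X, with D denoting the formal derivative. If X·(Da) − a + i·n·X·b = 0, then there exists a formal power series f over ℂ such that a = i·n·X·f and b = −X·(Df). (Every 1-cocycle in a nonzero Fourier mode of the Poisson complex of the formal neighborhood of the necklace is a coboundary: H¹_n = 0 for n ≠ 0.) -/

import Mathlib

open PowerSeries

/-- In a nonzero Fourier mode `n` of the Poisson complex of the formal
neighborhood of the necklace, every 1-cocycle `(a, b)` (i.e. with
`X·a′ − a + i n X·b = 0`) is the coboundary of a 0-cochain `f`
(i.e. `a = i n X f`, `b = −X f′`): `H¹_n = 0` for `n ≠ 0`. -/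
theorem formal_mode_H1_trivial (n : ℤ) (hn : n ≠ 0) (a b : PowerSeries ℂ)
    (hcocycle : X * derivative ℂ a - a + C (Complex.I * n) * X * b = 0) :
    ∃ f : PowerSeries ℂ,
      a = C (Complex.I * n) * X * f ∧ b = -(X * derivative ℂ f) := by
  set c : ℂ := Complex.I * n with hc
  have hcne : c ≠ 0 := by
    simp [hc, Complex.I_ne_zero, Complex.ext_iff]
    exact_mod_cast hn
  have hco : ∀ k : ℕ, (coeff k) (X * derivative ℂ a) - coeff k a
      + c * coeff k (X * b) = 0 := by
    intro k
    have := congrArg (coeff k) hcocycle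
    simpa [mul_assoc, map_add, map_sub] using this
  have h0 : coeff 0 a = 0 := by
    have := hco 0
    simpa using this
  have hkey : ∀ k : ℕ, (k : ℂ) * coeff (k + 1) a + c * coeff k b = 0 := by
    intro k
    have := hco (k + 1)
    rw [coeff_succ_X_mul, coeff_succ_X_mul, coeff_derivative] at this
    ring_nf at this ⊢
    linear_combination this
  refine ⟨PowerSeries.mk (fun m => coeff (m + 1) a / c), ?_, ?_⟩
  · ext k
    rw [mul_assoc]
    cases k with
    | zero => simpa using h0
    | succ m =>
      rw [coeff_C_mul, coeff_succ_X_mul, coeff_mk]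
      field_simp
  · ext k
    cases k with
    | zero =>
      have := hkey 0
      simp only [Nat.cast_zero, zero_mul, zero_add] at this
      have hb0 : coeff 0 b = 0 := by
        rcases mul_eq_zero.mp this with h | h
        · exact absurd h hcne
        · exact h
      simpa using hb0
    | succ m =>
      rw [map_neg, coeff_succ_X_mul, coeff_derivative, coeff_mk]
      have := hkey (m + 1)
      push_cast at this ⊢
      field_simp
      linear_combination this
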